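/- arXiv:2505.20009 — 4 statements merged into one kernel-verified Lean document; each statement's English description precedes it below -/
import Mathlib

section
/- Projection correctness: for every valuation v, every atom a, and every closed subatomic formula F, eval_v(F) equals eval_v of the left a-projection of F if v(a) = false, and equals eval_v of the right a-projection of F if v(a) = true. -/
inductive SF (A : Type) : Type
  | zero : SF A
  | one : SF A
  | atm : A → SF A → SF A → SF A
  | and : SF A → SF A → SF A
  | or : SF A → SF A → SF A

def SF.eval {A : Type} (v : A → Bool) : SF A → Bool
  | .zero => false
  | .one => true
  | .atm a F G => if v a then G.eval v else F.eval v
  | .and F G => F.eval v && G.eval v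
  | .or F G => F.eval v || G.eval v

/-- Left projection with respect to atom `a`. -/
def SF.lproj {A : Type} [DecidableEq A] (a : A) : SF A → SF A
  | .zero => .zero
  | .one => .one
  | .atm b F G => if b = a then F.lproj a else .atm b (F.lproj a) (G.lproj a)
  | .and F G => .and (F.lproj a) (G.lproj a)
  | .or F G => .or (F.lproj a) (G.lproj a)

/-- Right projection with respect to atom `a`. -/
def SF.rproj {A : Type} [DecidableEq A] (a : A) : SF A → SF A
  | .zero => .zero
  | .one => .one
  | .atm b F G => if b = a then G.rproj a else .atm b (F.rproj a) (G.rproj a)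
  | .and F G => .and (F.rproj a) (G.rproj a)
  | .or F G => .or (F.rproj a) (G.rproj a)

theorem projection_correct {A : Type} [DecidableEq A] (v : A → Bool) (a : A) (F : SF A) :
    (v a = false → F.eval v = (F.lproj a).eval v) ∧
    (v a = true → F.eval v = (F.rproj a).eval v) := by
  induction F with
  | zero => simp [SF.eval, SF.lproj, SF.rproj]
  | one => simp [SF.eval, SF.lproj, SF.rproj]
  | atm b F G ihF ihG =>
    constructor <;> intro h <;>
      simp only [SF.eval, SF.lproj, SF.rproj] <;>
      by_cases hb : b = a <;>
      simp [hb, h, SF.eval, ihF.1, ihF.2, ihG.1, ihG.2]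
  | and F G ihF ihG =>
    exact ⟨fun h => by simp [SF.eval, SF.lproj, ihF.1 h, ihG.1 h],
           fun h => by simp [SF.eval, SF.rproj, ihF.2 h, ihG.2 h]⟩
  | or F G ihF ihG =>
    exact ⟨fun h => by simp [SF.eval, SF.lproj, ihF.1 h, ihG.1 h],
           fun h => by simp [SF.eval, SF.rproj, ihF.2 h, ihG.2 h]⟩
end

section
/- Generalized medial (merge) soundness: let A(x₁,…,xₙ) be a boolean function given by a formula built only from ∧ and ∨ in which each variable xᵢ occurs exactly once. Then for all booleans b₁,…,bₙ,c₁,…,cₙ, A(b₁,…,bₙ) ∨ A(c₁,…,cₙ) implies A(b₁ ∨ c₁, …, bₙ ∨ cₙ). -/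
inductive MF (V : Type) : Type
  | leaf : V → MF V
  | and : MF V → MF V → MF V
  | or : MF V → MF V → MF V

def MF.eval {V : Type} (v : V → Bool) : MF V → Bool
  | .leaf x => v x
  | .and F G => F.eval v && G.eval v
  | .or F G => F.eval v || G.eval v

/-- The list of variable occurrences of the formula. -/
def MF.vars {V : Type} : MF V → List V
  | .leaf x => [x]
  | .and F G => F.vars ++ G.vars
  | .or F G => F.vars ++ G.vars

/-- De Morgan dual: swap ∧ and ∨, keeping variables fixed. -/
def MF.dual {V : Type} : MF V → MF V
  | .leaf x => .leaf x
  | .and F G => .or F.dual G.dual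
  | .or F G => .and F.dual G.dual

/-- Replace every connective by ∧. -/
def MF.allAnd {V : Type} : MF V → MF V
  | .leaf x => .leaf x
  | .and F G => .and F.allAnd G.allAnd
  | .or F G => .and F.allAnd G.allAnd

/-- Replace every connective by ∨. -/
def MF.allOr {V : Type} : MF V → MF V
  | .leaf x => .leaf x
  | .and F G => .or F.allOr G.allOr
  | .or F G => .or F.allOr G.allOr

lemma MF.eval_mono {V : Type} (A : MF V) (b c : V → Bool)
    (h : ∀ x, b x = true → c x = true) (hb : A.eval b = true) : A.eval c = true := by
  induction A with
  | leaf x => exact h x hb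
  | and F G ihF ihG =>
    simp only [MF.eval, Bool.and_eq_true] at *
    exact ⟨ihF hb.1, ihG hb.2⟩
  | or F G ihF ihG =>
    simp only [MF.eval, Bool.or_eq_true] at *
    rcases hb with hb | hb
    · exact Or.inl (ihF hb)
    · exact Or.inr (ihG hb)

theorem generalized_medial_sound {V : Type} (A : MF V) (hlin : A.vars.Nodup)
    (b c : V → Bool) (h : (A.eval b || A.eval c) = true) :
    A.eval (fun x => b x || c x) = true := by
  rcases Bool.or_eq_true_iff.mp h with h | h
  · exact A.eval_mono b _ (fun x hx => by simp [hx]) h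
  · exact A.eval_mono c _ (fun x hx => by simp [hx]) h
end

section
/- Generalized identity (merge switch) soundness: let A be a formula built from binary ∧ and ∨ over variables x₁,…,xₙ, each occurring exactly once, let A^∧ be A with every connective replaced by ∧, and let Ā be the De Morgan dual of A (obtained by swapping ∧ and ∨). Then for all booleans b₁,…,bₙ,c₁,…,cₙ, A^∧(b₁ ∨ c₁, …, bₙ ∨ cₙ) implies A(b₁,…,bₙ) ∨ Ā(c₁,…,cₙ). -/
theorem generalized_identity_sound {V : Type} (A : MF V) (hlin : A.vars.Nodup)
    (b c : V → Bool) (h : A.allAnd.eval (fun x => b x || c x) = true) :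
    (A.eval b || A.dual.eval c) = true := by
  clear hlin
  induction A with
  | leaf x => simpa [MF.eval, MF.allAnd, MF.dual] using h
  | and F G ihF ihG =>
    simp only [MF.allAnd, MF.eval, Bool.and_eq_true] at h
    have h1 := ihF h.1
    have h2 := ihG h.2
    simp only [MF.dual, MF.eval, Bool.or_eq_true, Bool.and_eq_true] at *
    tauto
  | or F G ihF ihG =>
    simp only [MF.allAnd, MF.eval, Bool.and_eq_true] at h
    have h1 := ihF h.1
    have h2 := ihG h.2
    simp only [MF.dual, MF.eval, Bool.or_eq_true, Bool.and_eq_true] at *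
    tauto
end

section
/- Generalized cut (merge switch) soundness: let A be a formula built from binary ∧ and ∨ over variables x₁,…,xₙ, each occurring exactly once, let A^∨ be A with every connective replaced by ∨, and let Ā be the De Morgan dual of A. Then for all booleans b₁,…,bₙ,c₁,…,cₙ, A(b₁,…,bₙ) ∧ Ā(c₁,…,cₙ) implies A^∨(b₁ ∧ c₁, …, bₙ ∧ cₙ). -/
theorem generalized_cut_sound {V : Type} (A : MF V) (hlin : A.vars.Nodup)
    (b c : V → Bool) (h : (A.eval b && A.dual.eval c) = true) :
    A.allOr.eval (fun x => b x && c x) = true := by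
  clear hlin
  induction A with
  | leaf x => simpa [MF.eval, MF.dual, MF.allOr] using h
  | and F G ihF ihG =>
    simp only [MF.eval, MF.dual, MF.allOr, Bool.and_eq_true, Bool.or_eq_true] at h ⊢
    rcases h with ⟨⟨hF, hG⟩, hFd | hGd⟩
    · exact Or.inl (ihF (by simp [hF, hFd]))
    · exact Or.inr (ihG (by simp [hG, hGd]))
  | or F G ihF ihG =>
    simp only [MF.eval, MF.dual, MF.allOr, Bool.and_eq_true, Bool.or_eq_true] at h ⊢
    rcases h with ⟨hF | hG, hFd, hGd⟩
    · exact Or.inl (ihF (by simp [hF, hFd]))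
    · exact Or.inr (ihG (by simp [hG, hGd]))
end
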